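/- There exist constants C > 0 and λ₀ > 0 such that for all real λ ≥ λ₀ and all natural numbers l with l ≥ λ − √λ, one has 1/D_λ(l) ≤ C·e^{−λ}·λ^l/l!. -/

import Mathlib

open Real Finset

set_option maxHeartbeats 1000000

/-- `D lam l = ∑_{k=0}^{l} l! / ((l-k)! * lam^k)`. -/
noncomputable def D (lam : ℝ) (l : ℕ) : ℝ :=
  ∑ k ∈ Finset.range (l + 1),
    (Nat.factorial l : ℝ) / ((Nat.factorial (l - k) : ℝ) * lam ^ k)

lemma factorial_upper (n : ℕ) (hn : 1 ≤ n) :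
    (Nat.factorial n : ℝ) ≤ exp 1 * Real.sqrt n * ((n : ℝ) / exp 1) ^ n := by
  obtain ⟨k, rfl⟩ : ∃ k, n = k + 1 := ⟨n - 1, by omega⟩
  have hpos := Stirling.stirlingSeq'_pos k
  have hpos1 := Stirling.stirlingSeq'_pos 0
  have h1 : Stirling.stirlingSeq (k + 1) ≤ exp 1 / Real.sqrt 2 := by
    have hmono := Stirling.log_stirlingSeq'_antitone (Nat.zero_le k)
    simp only [Function.comp, Nat.succ_eq_add_one, Nat.zero_add] at hmono
    have := Real.exp_le_exp.2 hmono
    rw [Real.exp_log hpos, Real.exp_log (by simpa using hpos1)] at this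
    simpa [Stirling.stirlingSeq_one] using this
  have h2 : (Nat.factorial (k+1) : ℝ) =
      Stirling.stirlingSeq (k+1) * (Real.sqrt (2 * (k+1)) * (((k:ℝ)+1) / exp 1) ^ (k+1)) := by
    rw [Stirling.stirlingSeq]
    push_cast
    rw [div_mul_cancel₀]
    positivity
  rw [h2]
  have hs : Real.sqrt (2 * ((k:ℝ)+1)) = Real.sqrt 2 * Real.sqrt ((k:ℝ)+1) := by
    rw [← Real.sqrt_mul (by norm_num)]
  have hsqrt2 : (0:ℝ) < Real.sqrt 2 := by positivity
  push_cast
  calc Stirling.stirlingSeq (k+1) * (Real.sqrt (2 * ((k:ℝ)+1)) * (((k:ℝ)+1) / exp 1) ^ (k+1))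
      ≤ (exp 1 / Real.sqrt 2) * (Real.sqrt (2 * ((k:ℝ)+1)) * (((k:ℝ)+1) / exp 1) ^ (k+1)) := by
        apply mul_le_mul_of_nonneg_right h1
        positivity
    _ = exp 1 * Real.sqrt ((k:ℝ)+1) * (((k:ℝ)+1) / exp 1) ^ (k+1) := by
        rw [hs]; field_simp

lemma central (lam : ℝ) (hlam : 100 ≤ lam) (l₀ : ℕ)
    (h1 : lam - Real.sqrt lam ≤ l₀) (h2 : (l₀:ℝ) ≤ lam - Real.sqrt lam + 1) :
    Real.exp (lam - 2) / Real.sqrt lam ≤ lam ^ l₀ / (Nat.factorial l₀ : ℝ) := by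
  have hlam0 : (0:ℝ) < lam := by linarith
  set r := Real.sqrt lam with hr_def
  have hr2 : r ^ 2 = lam := Real.sq_sqrt hlam0.le
  have hr : 10 ≤ r := by
    rw [hr_def]
    rw [show (10:ℝ) = Real.sqrt 100 by rw [show (100:ℝ) = 10^2 by norm_num, Real.sqrt_sq]; norm_num]
    exact Real.sqrt_le_sqrt hlam
  have hl₀cast : (1:ℝ) ≤ l₀ := by nlinarith
  have hl₀ : 1 ≤ l₀ := by exact_mod_cast Nat.one_le_cast.2 (by exact_mod_cast hl₀cast)
  have hl₀pos : (0:ℝ) < l₀ := by linarith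
  have hl₀le : (l₀:ℝ) ≤ lam := by nlinarith
  -- key exponential estimate
  have key : Real.exp (lam - 1) ≤ (exp 1 * lam / l₀) ^ l₀ := by
    have hx : (0:ℝ) < exp 1 * lam / l₀ := by positivity
    have hxeq : (exp 1 * lam / l₀ : ℝ) ^ l₀ = Real.exp (l₀ * Real.log (exp 1 * lam / l₀)) := by
      rw [Real.exp_nat_mul, Real.exp_log hx]
    rw [hxeq]
    apply Real.exp_le_exp.2
    have hlogeq : Real.log (exp 1 * lam / l₀) = 1 - Real.log ((l₀:ℝ)/lam) := by
      rw [Real.log_div (by positivity) (by positivity), Real.log_mul (by positivity) (by positivity),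
        Real.log_exp, Real.log_div (by positivity) (by positivity)]
      ring
    rw [hlogeq]
    have hlog : Real.log ((l₀:ℝ)/lam) ≤ (l₀:ℝ)/lam - 1 := Real.log_le_sub_one_of_pos (by positivity)
    have hsq : (lam - l₀)^2 ≤ lam := by nlinarith
    have hstep' : lam * (lam - 1) ≤ (l₀:ℝ) * (2*lam - l₀) := by nlinarith [hsq]
    have hstep : lam - 1 ≤ (l₀:ℝ) * (2 - l₀/lam) := by
      rw [← sub_nonneg]
      have heq : (l₀:ℝ) * (2 - l₀/lam) - (lam - 1) = ((l₀:ℝ)*(2*lam - l₀) - lam*(lam-1))/lam := by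
        field_simp
      rw [heq]
      exact div_nonneg (by linarith) hlam0.le
    calc lam - 1 ≤ (l₀:ℝ) * (2 - l₀/lam) := hstep
      _ ≤ (l₀:ℝ) * (1 - Real.log ((l₀:ℝ)/lam)) := by
          apply mul_le_mul_of_nonneg_left _ hl₀pos.le
          linarith
  -- Stirling
  have hfac := factorial_upper l₀ hl₀
  have hfacpos : (0:ℝ) < Nat.factorial l₀ := by exact_mod_cast Nat.factorial_pos l₀
  have hd : (0:ℝ) < exp 1 * Real.sqrt l₀ * ((l₀:ℝ) / exp 1) ^ l₀ := by positivity
  have step1 : lam ^ l₀ / (exp 1 * Real.sqrt l₀ * ((l₀:ℝ) / exp 1) ^ l₀)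
      ≤ lam ^ l₀ / (Nat.factorial l₀ : ℝ) :=
    div_le_div_of_nonneg_left (by positivity) hfacpos hfac
  have step2 : lam ^ l₀ / (exp 1 * Real.sqrt l₀ * ((l₀:ℝ) / exp 1) ^ l₀)
      = (exp 1 * lam / l₀) ^ l₀ / (exp 1 * Real.sqrt l₀) := by
    rw [div_pow, div_pow, mul_pow]
    have : ((l₀:ℝ))^l₀ ≠ 0 := by positivity
    field_simp
  have hsl : Real.sqrt (l₀:ℝ) ≤ r := Real.sqrt_le_sqrt hl₀le
  have hslpos : (0:ℝ) < Real.sqrt l₀ := Real.sqrt_pos.2 hl₀pos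
  have step3 : Real.exp (lam - 1) / (exp 1 * r) ≤ (exp 1 * lam / l₀) ^ l₀ / (exp 1 * Real.sqrt l₀) := by
    apply div_le_div₀ (by positivity) key (by positivity)
    exact mul_le_mul_of_nonneg_left hsl (Real.exp_pos 1).le
  have step4 : Real.exp (lam - 2) / r = Real.exp (lam - 1) / (exp 1 * r) := by
    rw [show lam - 1 = (lam - 2) + 1 by ring, Real.exp_add]
    field_simp
  calc Real.exp (lam - 2) / r = Real.exp (lam - 1) / (exp 1 * r) := step4
    _ ≤ (exp 1 * lam / l₀) ^ l₀ / (exp 1 * Real.sqrt l₀) := step3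
    _ = lam ^ l₀ / (exp 1 * Real.sqrt l₀ * ((l₀:ℝ) / exp 1) ^ l₀) := step2.symm
    _ ≤ lam ^ l₀ / (Nat.factorial l₀ : ℝ) := step1

lemma sum_lower (lam : ℝ) (hlam : 100 ≤ lam) (l : ℕ) (hl : lam - Real.sqrt lam ≤ l) :
    Real.exp (lam - 6) / 2 ≤ ∑ j ∈ Finset.range (l+1), lam ^ j / (Nat.factorial j : ℝ) := by
  have hlam0 : (0:ℝ) < lam := by linarith
  obtain ⟨r, hr_def⟩ : ∃ r : ℝ, r = Real.sqrt lam := ⟨_, rfl⟩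
  rw [← hr_def] at hl
  have hr2 : r ^ 2 = lam := by rw [hr_def]; exact Real.sq_sqrt hlam0.le
  have hr : 10 ≤ r := by
    rw [hr_def]
    rw [show (10:ℝ) = Real.sqrt 100 by
      rw [show (100:ℝ) = 10^2 by norm_num, Real.sqrt_sq]; norm_num]
    exact Real.sqrt_le_sqrt hlam
  have hrpos : (0:ℝ) < r := by linarith
  have h0 : (0:ℝ) ≤ lam - r := by nlinarith
  obtain ⟨l₀, hl₀_def⟩ : ∃ n : ℕ, n = Nat.ceil (lam - r) := ⟨_, rfl⟩
  obtain ⟨m, hm_def⟩ : ∃ n : ℕ, n = Nat.floor r := ⟨_, rfl⟩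
  have hc1 : lam - r ≤ (l₀:ℝ) := by rw [hl₀_def]; exact Nat.le_ceil _
  have hc2 : (l₀:ℝ) < lam - r + 1 := by rw [hl₀_def]; exact Nat.ceil_lt_add_one h0
  have hm1 : (m:ℝ) ≤ r := by rw [hm_def]; exact Nat.floor_le hrpos.le
  have hm2 : r < (m:ℝ) + 1 := by rw [hm_def]; exact Nat.lt_floor_add_one r
  have hl₀l : l₀ ≤ l := by rw [hl₀_def]; exact Nat.ceil_le.2 hl
  have hml₀R : (m:ℝ) + 1 ≤ (l₀:ℝ) := by nlinarith
  have hml₀ : m + 1 ≤ l₀ := by exact_mod_cast hml₀R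
  have hm1' : 1 ≤ m := by
    have : (1:ℝ) ≤ (m:ℝ) := by linarith
    exact_mod_cast this
  have hfacl₀ : (0:ℝ) < (Nat.factorial l₀ : ℝ) := by exact_mod_cast Nat.factorial_pos l₀
  -- per-term bound
  have hterm : ∀ j ∈ Finset.Icc (l₀ + 1 - m) l₀,
      Real.exp (-4) * (lam ^ l₀ / (Nat.factorial l₀ : ℝ)) ≤ lam ^ j / (Nat.factorial j : ℝ) := by
    intro j hj
    rw [Finset.mem_Icc] at hj
    obtain ⟨hj1, hj2⟩ := hj
    set i := l₀ - j with hi_def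
    have hji : j + i = l₀ := by omega
    have him : i + 1 ≤ m := by omega
    have hiR : (i:ℝ) ≤ r := by
      have : (i:ℝ) + 1 ≤ (m:ℝ) := by exact_mod_cast him
      linarith
    have hfacj : (0:ℝ) < (Nat.factorial j : ℝ) := by exact_mod_cast Nat.factorial_pos j
    have hjpos : (0:ℝ) < (j:ℝ) + 1 := by positivity
    -- factorial inequality
    have hfacNat : Nat.factorial j * (j+1)^i ≤ Nat.factorial l₀ := by
      rw [← hji]; exact Nat.factorial_mul_pow_le_factorial
    have hfacR : (Nat.factorial j : ℝ) * ((j:ℝ)+1)^i ≤ (Nat.factorial l₀ : ℝ) := by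
      exact_mod_cast hfacNat
    -- ratio bound
    have hjcast : ((l₀:ℝ)) + 1 - (m:ℝ) ≤ (j:ℝ) := by
      have : ((l₀ + 1 - m : ℕ):ℝ) ≤ (j:ℝ) := by exact_mod_cast hj1
      rw [Nat.cast_sub (by omega)] at this
      push_cast at this
      linarith
    have hj1R : lam * (1 - 2/r) ≤ (j:ℝ) + 1 := by
      have hle : lam - 2*r ≤ (j:ℝ) + 1 := by nlinarith
      have hlr : lam / r = r := by
        rw [eq_comm, eq_div_iff hrpos.ne']; nlinarith
      have heq : lam * (1 - 2/r) = lam - 2*r := by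
        calc lam * (1 - 2/r) = lam - 2*(lam/r) := by ring
          _ = lam - 2*r := by rw [hlr]
      linarith
    have hexpneg : Real.exp (-(4/r)) ≤ 1 - 2/r := by
      have h1 : 4/r + 1 ≤ Real.exp (4/r) := Real.add_one_le_exp (4/r)
      have h2 : (0:ℝ) < 1 + 4/r := by positivity
      have h3 : Real.exp (-(4/r)) = (Real.exp (4/r))⁻¹ := by rw [Real.exp_neg]
      rw [h3]
      have h4 : (Real.exp (4/r))⁻¹ ≤ (1 + 4/r)⁻¹ := by
        apply inv_anti₀ h2
        linarith
      have h5 : (1 + 4/r)⁻¹ ≤ 1 - 2/r := by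
        rw [inv_le_iff_one_le_mul₀ h2]
        have heq1 : (1 - 2/r) * (1 + 4/r) = 1 + 2/r - 8/r^2 := by field_simp; ring
        have heq2 : 2/r - 8/r^2 = (2*r-8)/r^2 := by field_simp
        have h6 : (0:ℝ) ≤ (2*r - 8)/r^2 := div_nonneg (by linarith) (by positivity)
        nlinarith [heq1, heq2, h6]
      linarith
    have h2rpos : (0:ℝ) < 1 - 2/r := lt_of_lt_of_le (Real.exp_pos _) hexpneg
    have hratio : lam / ((j:ℝ)+1) ≤ Real.exp (4/r) := by
      have hA : lam / ((j:ℝ)+1) ≤ lam / (lam * (1 - 2/r)) :=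
        div_le_div_of_nonneg_left hlam0.le (by positivity) hj1R
      have hB : lam / (lam * (1 - 2/r)) = (1 - 2/r)⁻¹ := by
        field_simp
      have hC : (1 - 2/r)⁻¹ ≤ Real.exp (4/r) := by
        rw [show Real.exp (4/r) = (Real.exp (-(4/r)))⁻¹ by rw [Real.exp_neg, inv_inv]]
        exact inv_anti₀ (Real.exp_pos _) hexpneg
      rw [hB] at hA
      linarith
    have hpow : (lam / ((j:ℝ)+1)) ^ i ≤ Real.exp 4 := by
      calc (lam / ((j:ℝ)+1)) ^ i ≤ (Real.exp (4/r)) ^ i :=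
            pow_le_pow_left₀ (by positivity) hratio i
        _ = Real.exp ((i:ℝ) * (4/r)) := (Real.exp_nat_mul _ i).symm
        _ ≤ Real.exp 4 := by
            apply Real.exp_le_exp.2
            have hd1 : (i:ℝ)/r ≤ 1 := by rw [div_le_one hrpos]; exact hiR
            have hd2 : (i:ℝ) * (4/r) = 4 * ((i:ℝ)/r) := by ring
            rw [hd2]
            linarith
    have hA : lam ^ l₀ / (Nat.factorial l₀ : ℝ) ≤ (lam ^ j / (Nat.factorial j : ℝ)) * (lam / ((j:ℝ)+1)) ^ i := by
      have h1 : lam ^ l₀ / (Nat.factorial l₀ : ℝ) ≤ lam ^ l₀ / ((Nat.factorial j : ℝ) * ((j:ℝ)+1)^i) :=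
        div_le_div_of_nonneg_left (by positivity) (by positivity) hfacR
      have h2 : lam ^ l₀ / ((Nat.factorial j : ℝ) * ((j:ℝ)+1)^i)
          = (lam ^ j / (Nat.factorial j : ℝ)) * (lam / ((j:ℝ)+1)) ^ i := by
        rw [← hji, pow_add, div_pow]
        field_simp
      linarith
    calc Real.exp (-4) * (lam ^ l₀ / (Nat.factorial l₀ : ℝ))
        ≤ Real.exp (-4) * ((lam ^ j / (Nat.factorial j : ℝ)) * (lam / ((j:ℝ)+1)) ^ i) :=
          mul_le_mul_of_nonneg_left hA (Real.exp_pos _).le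
      _ ≤ Real.exp (-4) * ((lam ^ j / (Nat.factorial j : ℝ)) * Real.exp 4) := by
          apply mul_le_mul_of_nonneg_left _ (Real.exp_pos _).le
          exact mul_le_mul_of_nonneg_left hpow (by positivity)
      _ = lam ^ j / (Nat.factorial j : ℝ) := by
          rw [show Real.exp (-4) * ((lam ^ j / (Nat.factorial j : ℝ)) * Real.exp 4)
            = (Real.exp (-4) * Real.exp 4) * (lam ^ j / (Nat.factorial j : ℝ)) by ring,
            ← Real.exp_add]
          norm_num
  -- subset and card
  have hsub : Finset.Icc (l₀+1-m) l₀ ⊆ Finset.range (l+1) := by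
    intro x hx
    rw [Finset.mem_Icc] at hx
    rw [Finset.mem_range]
    omega
  have hcard : (Finset.Icc (l₀+1-m) l₀).card = m := by
    rw [Nat.card_Icc]; omega
  have hblock : (m:ℝ) * (Real.exp (-4) * (lam ^ l₀ / (Nat.factorial l₀ : ℝ)))
      ≤ ∑ j ∈ Finset.Icc (l₀+1-m) l₀, lam ^ j / (Nat.factorial j : ℝ) := by
    have := Finset.card_nsmul_le_sum (Finset.Icc (l₀+1-m) l₀)
      (fun j => lam ^ j / (Nat.factorial j : ℝ))
      (Real.exp (-4) * (lam ^ l₀ / (Nat.factorial l₀ : ℝ))) hterm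
    rw [hcard, nsmul_eq_mul] at this
    exact this
  have hsum : ∑ j ∈ Finset.Icc (l₀+1-m) l₀, lam ^ j / (Nat.factorial j : ℝ)
      ≤ ∑ j ∈ Finset.range (l+1), lam ^ j / (Nat.factorial j : ℝ) := by
    apply Finset.sum_le_sum_of_subset_of_nonneg hsub
    intro x _ _
    positivity
  have hX : Real.exp (lam - 2) / r ≤ lam ^ l₀ / (Nat.factorial l₀ : ℝ) := by
    rw [hr_def]
    exact central lam hlam l₀ (by rw [← hr_def]; exact hc1) (by rw [← hr_def]; linarith)
  have hfinal : Real.exp (lam - 6) / 2 ≤ (m:ℝ) * (Real.exp (-4) * (lam ^ l₀ / (Nat.factorial l₀ : ℝ))) := by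
    have hm_half : r/2 ≤ (m:ℝ) := by linarith
    have hee : Real.exp (-4) * (Real.exp (lam-2) / r) = Real.exp (lam - 6) / r := by
      rw [← mul_div_assoc, ← Real.exp_add]
      ring_nf
    calc Real.exp (lam - 6) / 2 = (r/2) * (Real.exp (lam-6) / r) := by field_simp
      _ ≤ (m:ℝ) * (Real.exp (lam-6) / r) := by
          apply mul_le_mul_of_nonneg_right hm_half (by positivity)
      _ = (m:ℝ) * (Real.exp (-4) * (Real.exp (lam-2) / r)) := by rw [hee]
      _ ≤ (m:ℝ) * (Real.exp (-4) * (lam ^ l₀ / (Nat.factorial l₀ : ℝ))) := by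
          apply mul_le_mul_of_nonneg_left _ (by positivity)
          exact mul_le_mul_of_nonneg_left hX (Real.exp_pos _).le
  linarith

lemma D_eq (lam : ℝ) (hlam : 0 < lam) (l : ℕ) :
    D lam l = ((Nat.factorial l : ℝ) / lam ^ l) *
      ∑ j ∈ Finset.range (l+1), lam ^ j / (Nat.factorial j : ℝ) := by
  have h1 : D lam l = ∑ j ∈ Finset.range (l+1),
      (Nat.factorial l : ℝ) / ((Nat.factorial j : ℝ) * lam ^ (l-j)) := by
    rw [D, ← Finset.sum_range_reflect]
    apply Finset.sum_congr rfl
    intro k hk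
    rw [Finset.mem_range] at hk
    have he : l + 1 - 1 - k = l - k := by omega
    have he2 : l - (l - k) = k := by omega
    rw [he, he2]
  rw [h1, Finset.mul_sum]
  apply Finset.sum_congr rfl
  intro j hj
  rw [Finset.mem_range] at hj
  have hj' : j ≤ l := by omega
  have hpow : lam ^ (l-j) * lam ^ j = lam ^ l := by
    rw [← pow_add]; congr 1; omega
  have hfj : (0:ℝ) < (Nat.factorial j : ℝ) := by exact_mod_cast Nat.factorial_pos j
  field_simp
  rw [← hpow]

/-- There are constants `C > 0`, `λ₀ > 0` such that for all `λ ≥ λ₀` and all naturals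
`l ≥ λ − √λ`, `1/D_λ(l) ≤ C·e^{−λ}·λ^l/l!`. -/
theorem tail_estimate :
    ∃ C > (0 : ℝ), ∃ lam₀ > (0 : ℝ), ∀ lam : ℝ, lam₀ ≤ lam → ∀ l : ℕ,
      lam - Real.sqrt lam ≤ (l : ℝ) →
      1 / D lam l ≤ C * Real.exp (-lam) * lam ^ l / (Nat.factorial l : ℝ) := by
  refine ⟨2 * Real.exp 6, by positivity, 100, by norm_num, ?_⟩
  intro lam hlam l hl
  have hlam0 : (0:ℝ) < lam := lt_of_lt_of_le (by norm_num) hlam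
  have hS := sum_lower lam hlam l hl
  set S := ∑ j ∈ Finset.range (l+1), lam ^ j / (Nat.factorial j : ℝ) with hS_def
  have hSpos : 0 < S := lt_of_lt_of_le (by positivity) hS
  have hfac : (0:ℝ) < (Nat.factorial l : ℝ) := by exact_mod_cast Nat.factorial_pos l
  have hD : D lam l = ((Nat.factorial l : ℝ) / lam ^ l) * S := D_eq lam hlam0 l
  have key : 1/S ≤ 2 * Real.exp 6 * Real.exp (-lam) := by
    have h1 : 1/S ≤ 1/(Real.exp (lam-6)/2) := one_div_le_one_div_of_le (by positivity) hS
    have h2 : Real.exp 6 * Real.exp (-lam) = (Real.exp (lam-6))⁻¹ := by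
      rw [← Real.exp_add, ← Real.exp_neg]; ring_nf
    have h3 : 1/(Real.exp (lam-6)/2) = 2 * (Real.exp (lam-6))⁻¹ := by
      rw [one_div_div, div_eq_mul_inv, mul_comm]
    rw [mul_assoc, h2]
    rw [h3] at h1
    linarith
  have hLHS : 1 / D lam l = (lam ^ l / (Nat.factorial l : ℝ)) * (1/S) := by
    rw [hD]
    field_simp
  have hRHS : 2 * Real.exp 6 * Real.exp (-lam) * lam ^ l / (Nat.factorial l : ℝ)
      = (lam ^ l / (Nat.factorial l : ℝ)) * (2 * Real.exp 6 * Real.exp (-lam)) := by ring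
  rw [hLHS, hRHS]
  exact mul_le_mul_of_nonneg_left key (by positivity)
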